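/- Every irreducible B_n-submodule of V is 1-dimensional and equals F·v_{{1,...,k}} for some 0 ≤ k ≤ n. -/

import Mathlib

open Finset

/-- `f : Fin n → Option (Fin n)` represents an injective partial map of `{1,…,n}`
(elements 0-indexed): `f a = some x` means `a ∈ D(f)` with image `x`. Injectivity: -/
def IsPartialInj {n : ℕ} (f : Fin n → Option (Fin n)) : Prop :=
  ∀ a b x, f a = some x → f b = some x → a = b

/-- order preserving: `a < b` in the domain implies `f a < f b`. -/
def IsOrderPres {n : ℕ} (f : Fin n → Option (Fin n)) : Prop :=
  ∀ a b x y, a < b → f a = some x → f b = some y → x < y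

/-- order decreasing: `f a ≤ a` on the domain. -/
def IsOrderDec {n : ℕ} (f : Fin n → Option (Fin n)) : Prop :=
  ∀ a x, f a = some x → x ≤ a

/-- The planar upper triangular rook monoid `B_n`: order-preserving,
order-decreasing injective partial maps of `{1,…,n}`. -/
def Bn (n : ℕ) : Set (Fin n → Option (Fin n)) :=
  {f | IsPartialInj f ∧ IsOrderPres f ∧ IsOrderDec f}

/-- domain of the partial map. -/
def domf {n : ℕ} (f : Fin n → Option (Fin n)) : Finset (Fin n) :=
  Finset.univ.filter (fun a => (f a).isSome)

/-- image of a finite set under the partial map. -/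
def fimg {n : ℕ} (f : Fin n → Option (Fin n)) (S : Finset (Fin n)) : Finset (Fin n) :=
  S.biUnion (fun a => (f a).toFinset)

/-- the linear action of a partial map `f` on `V = ⊕_{S ⊆ n} F·v_S`:
`f · v_S = v_{f(S)}` if `S ⊆ D(f)`, and `0` otherwise. -/
noncomputable def actMap (F : Type*) [Field F] {n : ℕ} (f : Fin n → Option (Fin n)) :
    (Finset (Fin n) →₀ F) →ₗ[F] (Finset (Fin n) →₀ F) :=
  Finsupp.lsum F (fun S => if S ⊆ domf f then Finsupp.lsingle (fimg f S) else 0)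

/-- a subspace `W` of `V` is a `B_n`-submodule if it is invariant under the action. -/
def IsBnSub {n : ℕ} {F : Type*} [Field F] (W : Submodule F (Finset (Fin n) →₀ F)) : Prop :=
  ∀ f ∈ Bn n, ∀ v ∈ W, actMap F f v ∈ W

/-- the `B_n`-submodule of `V` generated by a vector `v`. -/
noncomputable def genMod (F : Type*) [Field F] {n : ℕ} (v : Finset (Fin n) →₀ F) :
    Submodule F (Finset (Fin n) →₀ F) :=
  sInf {W | IsBnSub W ∧ v ∈ W}

/-- `V_k`, the span of the `v_S` with `|S| = k`. -/
noncomputable def VK (F : Type*) [Field F] (n k : ℕ) : Submodule F (Finset (Fin n) →₀ F) :=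
  Submodule.span F {w | ∃ S : Finset (Fin n), S.card = k ∧ w = Finsupp.single S (1 : F)}

/-- the subset `{1, …, k}` of `{1, …, n}` (0-indexed: the `k` smallest elements). -/
def boldK (n k : ℕ) : Finset (Fin n) := Finset.univ.filter (fun a => a.val < k)

/-- `W` is an irreducible `B_n`-submodule of `V`. -/
def IsIrred {n : ℕ} {F : Type*} [Field F] (W : Submodule F (Finset (Fin n) →₀ F)) : Prop :=
  IsBnSub W ∧ W ≠ ⊥ ∧ ∀ U : Submodule F (Finset (Fin n) →₀ F),
    IsBnSub U → U ≤ W → U = ⊥ ∨ U = W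

lemma actMap_single (F : Type*) [Field F] {n : ℕ} (f : Fin n → Option (Fin n))
    (S : Finset (Fin n)) (c : F) :
    actMap F f (Finsupp.single S c) =
      if S ⊆ domf f then Finsupp.single (fimg f S) c else 0 := by
  rw [actMap, Finsupp.lsum_single]
  split_ifs <;> simp

lemma mem_domf {n : ℕ} {f : Fin n → Option (Fin n)} {a : Fin n} :
    a ∈ domf f ↔ ∃ x, f a = some x := by
  simp [domf, Option.isSome_iff_exists]

lemma fimg_card {n : ℕ} {f : Fin n → Option (Fin n)} (hf : IsPartialInj f)
    {S : Finset (Fin n)} (hS : S ⊆ domf f) : (fimg f S).card = S.card := by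
  rw [fimg, Finset.card_biUnion]
  · rw [Finset.sum_congr rfl (fun a ha => ?_), Finset.sum_const, smul_eq_mul, mul_one]
    obtain ⟨x, hx⟩ := mem_domf.1 (hS ha)
    simp [hx]
  · intro a ha b hb hab
    rw [Function.onFun, Finset.disjoint_left]
    intro x hxa hxb
    simp only [Option.mem_toFinset, Option.mem_def] at hxa hxb
    exact hab (hf a b x hxa hxb)

lemma mem_fimg {n : ℕ} {f : Fin n → Option (Fin n)} {S : Finset (Fin n)} {x : Fin n} :
    x ∈ fimg f S ↔ ∃ a ∈ S, f a = some x := by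
  simp [fimg, Option.mem_toFinset, Option.mem_def]

lemma boldK_card {n k : ℕ} (h : k ≤ n) : (boldK n k).card = k := by
  have : boldK n k = (Finset.univ : Finset (Fin k)).map (Fin.castLEEmb h) := by
    ext a
    simp only [boldK, Finset.mem_filter, Finset.mem_univ, true_and, Finset.mem_map,
      Fin.castLEEmb_apply]
    constructor
    · intro ha; exact ⟨⟨a.val, ha⟩, by ext; simp⟩
    · rintro ⟨b, rfl⟩; exact b.isLt
  rw [this, Finset.card_map, Finset.card_univ, Fintype.card_fin]

lemma fimg_boldK {n k : ℕ} (hk : k ≤ n) {f : Fin n → Option (Fin n)} (hf : f ∈ Bn n)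
    (hd : boldK n k ⊆ domf f) : fimg f (boldK n k) = boldK n k := by
  apply Finset.eq_of_subset_of_card_le
  · intro x hx
    obtain ⟨a, ha, hax⟩ := mem_fimg.1 hx
    have := hf.2.2 a x hax
    simp only [boldK, Finset.mem_filter, Finset.mem_univ, true_and] at ha ⊢
    exact lt_of_le_of_lt this ha
  · rw [fimg_card hf.1 hd]

-- partial identity on S
def eS {n : ℕ} (S : Finset (Fin n)) : Fin n → Option (Fin n) :=
  fun a => if a ∈ S then some a else none

lemma eS_mem_Bn {n : ℕ} (S : Finset (Fin n)) : eS S ∈ Bn n := by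
  refine ⟨?_, ?_, ?_⟩
  · intro a b x ha hb
    simp only [eS] at ha hb
    split_ifs at ha hb
    rw [Option.some_inj] at ha hb; rw [ha, hb]
  · intro a b x y hab ha hb
    simp only [eS] at ha hb
    split_ifs at ha hb
    rw [Option.some_inj] at ha hb; rw [← ha, ← hb]; exact hab
  · intro a x ha
    simp only [eS] at ha
    split_ifs at ha
    rw [Option.some_inj] at ha; rw [← ha]

lemma domf_eS {n : ℕ} (S : Finset (Fin n)) : domf (eS S) = S := by
  ext a; by_cases h : a ∈ S <;> simp [mem_domf, eS, h]

lemma fimg_eS {n : ℕ} {S T : Finset (Fin n)} (h : T ⊆ S) : fimg (eS S) T = T := by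
  ext x
  simp only [mem_fimg, eS]
  constructor
  · rintro ⟨a, ha, hax⟩
    rw [if_pos (h ha), Option.some_inj] at hax
    rwa [← hax]
  · intro hx; exact ⟨x, hx, by rw [if_pos (h hx)]⟩

-- the rank / compression map
lemma rankCard_le {n : ℕ} (S : Finset (Fin n)) (a : Fin n) :
    (S.filter (· < a)).card ≤ a.val := by
  calc (S.filter (· < a)).card ≤ (Finset.Iio a).card := by
        apply Finset.card_le_card
        intro x hx
        simp only [Finset.mem_filter] at hx
        simpa using hx.2
    _ = a.val := Fin.card_Iio a

def rmap {n : ℕ} (S : Finset (Fin n)) : Fin n → Option (Fin n) :=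
  fun a => if a ∈ S then some ⟨(S.filter (· < a)).card, lt_of_le_of_lt (rankCard_le S a) a.isLt⟩
    else none

lemma rmap_orderPres {n : ℕ} (S : Finset (Fin n)) : IsOrderPres (rmap S) := by
  intro a b x y hab ha hb
  simp only [rmap] at ha hb
  split_ifs at ha hb with h1 h2
  rw [Option.some_inj] at ha hb
  rw [← ha, ← hb, Fin.mk_lt_mk]
  apply Finset.card_lt_card
  constructor
  · intro z hz
    simp only [Finset.mem_filter] at hz ⊢
    exact ⟨hz.1, lt_trans hz.2 hab⟩
  · intro hsub
    have : a ∈ S.filter (· < b) := by simp [h1, hab]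
    have := hsub this
    simp at this

lemma rmap_mem_Bn {n : ℕ} (S : Finset (Fin n)) : rmap S ∈ Bn n := by
  refine ⟨?_, rmap_orderPres S, ?_⟩
  · intro a b x ha hb
    rcases lt_trichotomy a b with h | h | h
    · exact absurd (rmap_orderPres S a b x x h ha hb) (lt_irrefl x)
    · exact h
    · exact absurd (rmap_orderPres S b a x x h hb ha) (lt_irrefl x)
  · intro a x ha
    simp only [rmap] at ha
    split_ifs at ha
    rw [Option.some_inj] at ha
    rw [← ha]
    exact rankCard_le S a

lemma domf_rmap {n : ℕ} (S : Finset (Fin n)) : domf (rmap S) = S := by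
  ext a; by_cases h : a ∈ S <;> simp [mem_domf, rmap, h]

lemma fimg_rmap {n : ℕ} (S : Finset (Fin n)) : fimg (rmap S) S = boldK n S.card := by
  apply Finset.eq_of_subset_of_card_le
  · intro x hx
    obtain ⟨a, ha, hax⟩ := mem_fimg.1 hx
    simp only [rmap, if_pos ha, Option.some_inj] at hax
    simp only [boldK, Finset.mem_filter, Finset.mem_univ, true_and, ← hax]
    calc (S.filter (· < a)).card ≤ (S.erase a).card := by
          apply Finset.card_le_card
          intro z hz
          simp only [Finset.mem_filter] at hz
          exact Finset.mem_erase.2 ⟨ne_of_lt hz.2, hz.1⟩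
      _ < S.card := Finset.card_erase_lt_of_mem ha
  · rw [fimg_card (rmap_mem_Bn S).1 (by rw [domf_rmap]),
      boldK_card (le_trans (Finset.card_le_card (Finset.subset_univ S)) (by simp))]


lemma span_boldK_isBnSub {n k : ℕ} (hk : k ≤ n) (F : Type*) [Field F] :
    IsBnSub (Submodule.span F {Finsupp.single (boldK n k) (1 : F)}) := by
  intro f hf v hv
  rw [Submodule.mem_span_singleton] at hv ⊢
  obtain ⟨c, rfl⟩ := hv
  rw [map_smul, actMap_single]
  by_cases hd : boldK n k ⊆ domf f
  · rw [if_pos hd, fimg_boldK hk hf hd]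
    exact ⟨c, rfl⟩
  · rw [if_neg hd]
    exact ⟨0, by simp⟩


/-- every irreducible `B_n`-submodule of `V` is `1`-dimensional and equals
`F·v_{{1,…,k}}` for some `0 ≤ k ≤ n`. -/
theorem irreducible_submodules (n : ℕ) (F : Type*) [Field F] [CharZero F]
    (W : Submodule F (Finset (Fin n) →₀ F)) (hW : IsIrred W) :
    Module.finrank F W = 1 ∧
      ∃ k ≤ n, W = Submodule.span F {Finsupp.single (boldK n k) (1 : F)} := by
  obtain ⟨hsub, hbot, hirr⟩ := hW
  -- get a nonzero vector of W
  obtain ⟨v, hvW, hv0⟩ := Submodule.exists_mem_ne_zero_of_ne_bot hbot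
  have hsupp : v.support.Nonempty := by
    rw [Finsupp.support_nonempty_iff]; exact hv0
  -- pick S in the support of minimal cardinality
  obtain ⟨S, hS, hSmin⟩ := Finset.exists_min_image v.support Finset.card hsupp
  have hSmin' : ∀ T ∈ v.support, T ⊆ S → T = S := fun T hT hTS =>
    Finset.eq_of_subset_of_card_le hTS (hSmin T hT)
  -- apply the partial identity eS S : get v_S ∈ W
  have h1 : actMap F (eS S) v = Finsupp.single S (v S) := by
    rw [actMap, Finsupp.lsum_apply, Finsupp.sum]
    rw [Finset.sum_eq_single_of_mem S hS]
    · rw [domf_eS, if_pos (Finset.Subset.refl S)]; rw [fimg_eS (Finset.Subset.refl S)]; rfl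
    · intro T hT hne
      rw [domf_eS, if_neg, LinearMap.zero_apply]
      intro hTS
      exact hne (hSmin' T hT hTS)
  have hvS : Finsupp.single S (1 : F) ∈ W := by
    have h2 : Finsupp.single S (v S) ∈ W := h1 ▸ hsub (eS S) (eS_mem_Bn S) v hvW
    have h3 := W.smul_mem (v S)⁻¹ h2
    rwa [Finsupp.smul_single, smul_eq_mul, inv_mul_cancel₀ (Finsupp.mem_support_iff.1 hS)] at h3
  -- compress S to boldK n |S|
  set k := S.card with hk
  have hkn : k ≤ n := le_trans (Finset.card_le_card (Finset.subset_univ S)) (by simp)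
  have hvK : Finsupp.single (boldK n k) (1 : F) ∈ W := by
    have := hsub (rmap S) (rmap_mem_Bn S) _ hvS
    rwa [actMap_single, if_pos (by rw [domf_rmap]), fimg_rmap] at this
  -- the span of v_{boldK} is a Bn-submodule contained in W
  set U := Submodule.span F {Finsupp.single (boldK n k) (1 : F)} with hU
  have hUW : U ≤ W := by
    rw [hU, Submodule.span_le, Set.singleton_subset_iff]
    exact hvK
  have hUne : U ≠ ⊥ := by
    intro h
    have : Finsupp.single (boldK n k) (1 : F) ∈ U := Submodule.mem_span_singleton_self _
    rw [h, Submodule.mem_bot] at this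
    exact one_ne_zero (Finsupp.single_eq_zero.1 this)
  have hUeq : U = W := (hirr U (span_boldK_isBnSub hkn F) hUW).resolve_left hUne
  constructor
  · rw [← hUeq, hU, finrank_span_singleton (fun h => one_ne_zero (Finsupp.single_eq_zero.1 h))]
  · exact ⟨k, hkn, hUeq.symm⟩
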